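/- arXiv:2408.02345 — 2 statements merged into one kernel-verified Lean document; each statement's English description precedes it below -/
import Mathlib

section
/- Fix ε > 0 and let V₁ = N₁, i.e. V₁(x) = Z⁻¹exp(−⟨x⟩) with Z = ∫exp(−⟨x⟩)dx. Then V_ε*ρ(x) > 0 for every x and every Borel probability measure ρ, and there is a constant C = C(V₁) > 0 such that for every ρ ∈ P₂(ℝ^d): sup_x |(∇V_ε * log(V_ε*ρ))(x)| ≤ C/ε and sup_x |∇(∇V_ε * log(V_ε*ρ))(x)| ≤ C/ε². -/
open MeasureTheory Filter
open scoped ENNReal Topology RealInnerProductSpace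

noncomputable section

/-- Euclidean space `ℝ^d`. -/
abbrev Rd (d : ℕ) : Type := EuclideanSpace ℝ (Fin d)

/-- Japanese bracket `⟨x⟩ = √(1+‖x‖²)`. -/
def jbr {d : ℕ} (x : Rd d) : ℝ := Real.sqrt (1 + ‖x‖ ^ 2)

/-- The normalised kernels `N_p(x) = Z_p⁻¹ exp(-⟨x⟩^p)`, `Z_p = ∫ exp(-⟨x⟩^p)`. -/
def Nker (d p : ℕ) : Rd d → ℝ := fun x =>
  (∫ y : Rd d, Real.exp (-(jbr y ^ p)))⁻¹ * Real.exp (-(jbr x ^ p))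

/-- Assumption (V1): `V ∈ C_b ∩ C¹`, `V ≥ 0`, `∫ V = 1`, `V` even. -/
structure IsV1 {d : ℕ} (V : Rd d → ℝ) : Prop where
  contDiff : ContDiff ℝ 1 V
  bdd : ∃ M, ∀ x, V x ≤ M
  nonneg : ∀ x, 0 ≤ V x
  integrable : Integrable V
  int_one : (∫ x : Rd d, V x) = 1
  symm : ∀ x, V (-x) = V x

/-- Rescaled mollifier `V_ε(x) = ε^{-d} V(x/ε)`. -/
def moll {d : ℕ} (ε : ℝ) (V : Rd d → ℝ) (x : Rd d) : ℝ := (ε ^ d)⁻¹ * V (ε⁻¹ • x)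

/-- Convolution with a measure: `(V_ε * μ)(x) = ∫ V_ε(x - y) dμ(y)`. -/
def convM {d : ℕ} (ε : ℝ) (V : Rd d → ℝ) (μ : Measure (Rd d)) (x : Rd d) : ℝ :=
  ∫ y, moll ε V (x - y) ∂μ

/-- `(∇V_ε * g)(x) = ∫ ∇V_ε(x - y) g(y) dy`. -/
def convGradF {d : ℕ} (ε : ℝ) (V : Rd d → ℝ) (g : Rd d → ℝ) (x : Rd d) : Rd d :=
  ∫ y, g y • gradient (moll ε V) (x - y)

/-- Finite second moment. -/
def FinSecondMoment {d : ℕ} (μ : Measure (Rd d)) : Prop :=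
  Integrable (fun x => ‖x‖ ^ 2) μ

/-- `γ` is a transport plan between `μ` and `ν`. -/
def IsCoupling {d : ℕ} (γ : Measure (Rd d × Rd d)) (μ ν : Measure (Rd d)) : Prop :=
  IsProbabilityMeasure γ ∧ γ.map Prod.fst = μ ∧ γ.map Prod.snd = ν

/-- Squared 2-Wasserstein distance. -/
def dW2sq {d : ℕ} (μ ν : Measure (Rd d)) : ℝ :=
  sInf ((fun γ : Measure (Rd d × Rd d) => ∫ q, ‖q.1 - q.2‖ ^ 2 ∂γ) '' {γ | IsCoupling γ μ ν})

/-- 2-Wasserstein distance. -/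
def dW {d : ℕ} (μ ν : Measure (Rd d)) : ℝ := Real.sqrt (dW2sq μ ν)

/-- Absolutely continuous curve in `(P₂, d_W)` on `[0,T]`. -/
def ACcurve {d : ℕ} (T : ℝ) (ρ : ℝ → Measure (Rd d)) : Prop :=
  ∃ g : ℝ → ℝ, (∀ r, 0 ≤ g r) ∧ IntegrableOn g (Set.Icc 0 T) ∧
    ∀ s t : ℝ, 0 ≤ s → s ≤ t → t ≤ T → dW (ρ s) (ρ t) ≤ ∫ r in s..t, g r

/-- The regularised entropy `H_σ^ε`. -/
def Hsig {d : ℕ} (ε σ : ℝ) (V N : Rd d → ℝ) (μ : Measure (Rd d)) : ℝ :=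
  ∫ x, ((1 - σ) * convM ε V μ x + σ * N x) *
    Real.log ((1 - σ) * convM ε V μ x + σ * N x)

/-- Geodesic interpolant `ρ_α = ((1-α)π¹ + απ²)_# γ`. -/
def geod {d : ℕ} (γ : Measure (Rd d × Rd d)) (α : ℝ) : Measure (Rd d) :=
  γ.map fun q : Rd d × Rd d => (1 - α) • q.1 + α • q.2

/-- Fast diffusion kernel `V(x) = c ⟨x⟩^{-2α}`, normalised. -/
def Vfd (d : ℕ) (α : ℝ) : Rd d → ℝ := fun x =>
  (∫ y : Rd d, jbr y ^ (-(2 * α)))⁻¹ * jbr x ^ (-(2 * α))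

/-- Laplacian `Δφ(x) = ∑ ∂²φ/∂x_i²`. -/
def lapl {d : ℕ} (φ : Rd d → ℝ) (x : Rd d) : ℝ :=
  ∑ i : Fin d,
    fderiv ℝ (fun y => fderiv ℝ φ y (EuclideanSpace.single i 1)) x (EuclideanSpace.single i 1)

/-- Weighted convolution `((V_ε w) * ρ)(x) = ∫ V_ε(x-y) w(x-y) dρ(y)`. -/
def wconv {d : ℕ} (ε : ℝ) (V : Rd d → ℝ) (w : Rd d → ℝ) (ρ : Measure (Rd d)) (x : Rd d) : ℝ :=
  ∫ y, moll ε V (x - y) * w (x - y) ∂ρ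

/-- Continuity in the narrow topology on `[0,T]`. -/
def NarrowContinuousOn {d : ℕ} (T : ℝ) (ρ : ℝ → Measure (Rd d)) : Prop :=
  ∀ f : Rd d → ℝ, Continuous f → (∃ M, ∀ x, |f x| ≤ M) →
    ContinuousOn (fun t => ∫ x, f x ∂(ρ t)) (Set.Icc 0 T)

/-- Weak measure solution of the regularised nonlocal heat equation (NLHE_σ). -/
def IsWeakSolNLHEs {d : ℕ} (T ε σ : ℝ) (V N : Rd d → ℝ)
    (ρ₀ : Measure (Rd d)) (ρ : ℝ → Measure (Rd d)) : Prop :=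
  ρ 0 = ρ₀ ∧
  (∀ t ∈ Set.Icc (0 : ℝ) T, IsProbabilityMeasure (ρ t) ∧ FinSecondMoment (ρ t)) ∧
  ACcurve T ρ ∧
  ∀ φ : Rd d → ℝ, ContDiff ℝ 1 φ → HasCompactSupport φ → ∀ t ∈ Set.Icc (0 : ℝ) T,
    (∫ x, φ x ∂(ρ t)) - (∫ x, φ x ∂ρ₀)
      = -(1 - σ) * ∫ s in (0 : ℝ)..t,
          ∫ x, ⟪gradient φ x,
              convGradF ε V
                (fun y => Real.log ((1 - σ) * convM ε V (ρ s) y + σ * N y)) x⟫ ∂(ρ s)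

/-- The a priori bounds provided by the JKO construction, with constant `C`. -/
def JKOBounds {d : ℕ} (T ε σ : ℝ) (V N : Rd d → ℝ) (C : ℝ) (ρ : ℝ → Measure (Rd d)) : Prop :=
  (∀ t ∈ Set.Icc (0 : ℝ) T, (∫ x, ‖x‖ ^ 2 ∂(ρ t)) ≤ C) ∧
  (∀ s ∈ Set.Icc (0 : ℝ) T, ∀ t ∈ Set.Icc (0 : ℝ) T, dW2sq (ρ s) (ρ t) ≤ C * |t - s|) ∧
  (∫ t in Set.Ioc (0 : ℝ) T,
      ∫ x, ‖gradient (fun y => Real.sqrt ((1 - σ) * convM ε V (ρ t) y + σ * N y)) x‖ ^ 2) ≤ C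

/-- Weak solution of the heat equation on `[0,T]` with initial datum `ρ₀`. -/
def IsWeakSolHeat {d : ℕ} (T : ℝ) (ρ₀ : Measure (Rd d)) (ρ : ℝ → Measure (Rd d)) : Prop :=
  ρ 0 = ρ₀ ∧
  (∀ t ∈ Set.Icc (0 : ℝ) T, IsProbabilityMeasure (ρ t) ∧ FinSecondMoment (ρ t)) ∧
  ACcurve T ρ ∧
  ∃ u : ℝ → Rd d → ℝ,
    (∀ t ∈ Set.Icc (0 : ℝ) T, (∀ x, 0 ≤ u t x) ∧
      ρ t = volume.withDensity fun x => ENNReal.ofReal (u t x)) ∧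
    Integrable (fun q : ℝ × Rd d => ‖gradient (fun y => Real.sqrt (u q.1 y)) q.2‖ ^ 2)
      ((volume.restrict (Set.Ioc (0 : ℝ) T)).prod volume) ∧
    ∀ φ : Rd d → ℝ, ContDiff ℝ 1 φ → HasCompactSupport φ → ∀ t ∈ Set.Icc (0 : ℝ) T,
      (∫ x, φ x ∂(ρ t)) - (∫ x, φ x ∂ρ₀)
        = -∫ s in (0 : ℝ)..t, ∫ x, ⟪gradient φ x, gradient (u s) x⟫

/-- Weak solution of the fast diffusion equation `∂_t ρ = Δρ^m` on `[0,T]`. -/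
def IsWeakSolFDE {d : ℕ} (T m : ℝ) (ρ₀ : Measure (Rd d)) (ρ : ℝ → Measure (Rd d)) : Prop :=
  ρ 0 = ρ₀ ∧
  (∀ t ∈ Set.Icc (0 : ℝ) T, IsProbabilityMeasure (ρ t) ∧ FinSecondMoment (ρ t)) ∧
  ACcurve T ρ ∧
  ∃ u : ℝ → Rd d → ℝ,
    (∀ t ∈ Set.Icc (0 : ℝ) T, (∀ x, 0 ≤ u t x) ∧
      ρ t = volume.withDensity fun x => ENNReal.ofReal (u t x)) ∧
    ∀ φ : Rd d → ℝ, ContDiff ℝ 2 φ → HasCompactSupport φ → ∀ t ∈ Set.Icc (0 : ℝ) T,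
      (∫ x, φ x ∂(ρ t)) - (∫ x, φ x ∂ρ₀)
        = ∫ s in (0 : ℝ)..t, ∫ x, lapl φ x * u s x ^ m

/-- The velocity field `ω = ∇V_ε * log(V_ε*ρ)`. -/
def omegaGlob (d : ℕ) (ε : ℝ) (V : Rd d → ℝ) (ρ : Measure (Rd d)) (x : Rd d) : Rd d :=
  ∫ y, Real.log (convM ε V ρ y) • gradient (moll ε V) (x - y)

namespace VB
set_option linter.unusedSectionVars false

variable {d : ℕ}


variable {d : ℕ}

lemma one_add_sq_pos (x : Rd d) : (0:ℝ) < 1 + ‖x‖ ^ 2 := by positivity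

lemma one_le_jbr (x : Rd d) : 1 ≤ jbr x := by
  have h := Real.sqrt_le_sqrt (show (1:ℝ) ≤ 1 + ‖x‖ ^ 2 by nlinarith [sq_nonneg ‖x‖])
  rwa [Real.sqrt_one] at h

lemma jbr_pos (x : Rd d) : 0 < jbr x := lt_of_lt_of_le one_pos (one_le_jbr x)

lemma norm_le_jbr (x : Rd d) : ‖x‖ ≤ jbr x := by
  have h := Real.sqrt_le_sqrt (show ‖x‖ ^ 2 ≤ 1 + ‖x‖ ^ 2 by linarith)
  rwa [Real.sqrt_sq (norm_nonneg x)] at h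

lemma jbr_neg (x : Rd d) : jbr (-x) = jbr x := by simp [jbr]

lemma jbr_add_le (x y : Rd d) : jbr x ≤ jbr y + ‖x - y‖ := by
  have h1 : ‖x‖ - ‖y‖ ≤ ‖x - y‖ := norm_sub_norm_le x y
  have h2 : jbr y + ‖x - y‖ = Real.sqrt ((jbr y + ‖x - y‖) ^ 2) := by
    rw [Real.sqrt_sq (add_nonneg (jbr_pos y).le (norm_nonneg _))]
  rw [jbr, h2]
  apply Real.sqrt_le_sqrt
  have h3 : jbr y ^ 2 = 1 + ‖y‖ ^ 2 := Real.sq_sqrt (one_add_sq_pos y).le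
  have h4 : ‖y‖ ≤ jbr y := norm_le_jbr y
  have h5 : 0 ≤ ‖x - y‖ := norm_nonneg _
  nlinarith [norm_nonneg x, norm_nonneg y]

lemma lipschitzWith_jbr : LipschitzWith 1 (jbr (d := d)) := by
  apply LipschitzWith.of_dist_le_mul
  intro x y
  rw [NNReal.coe_one, one_mul, Real.dist_eq, dist_eq_norm]
  rw [abs_sub_le_iff]
  constructor
  · have := jbr_add_le x y; linarith
  · have := jbr_add_le y x
    have : jbr y - jbr x ≤ ‖y - x‖ := by linarith
    rwa [norm_sub_rev y x] at this

lemma continuous_jbr : Continuous (jbr (d := d)) := lipschitzWith_jbr.continuous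

lemma contDiff_jbr : ContDiff ℝ 1 (jbr (d := d)) := by
  rw [contDiff_iff_contDiffAt]
  intro x
  exact (Real.contDiffAt_sqrt (one_add_sq_pos x).ne').comp x
    ((contDiff_const.add (contDiff_norm_sq ℝ)).contDiffAt)

lemma differentiable_jbr : Differentiable ℝ (jbr (d := d)) :=
  contDiff_jbr.differentiable one_ne_zero

lemma norm_fderiv_jbr_le (x : Rd d) : ‖fderiv ℝ jbr x‖ ≤ 1 := by
  have := norm_fderiv_le_of_lipschitz ℝ (lipschitzWith_jbr (d := d)) (x₀ := x)
  simpa using this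

lemma integrable_pow_mul_exp_neg_jbr (k : ℕ) :
    Integrable (fun x : Rd d => (1 + ‖x‖) ^ k * Real.exp (-jbr x)) := by
  set m := k + d + 1 with hm
  have hr : (Module.finrank ℝ (Rd d) : ℝ) < ((d : ℝ) + 1) := by
    rw [finrank_euclideanSpace_fin]; linarith
  have hint := (integrable_one_add_norm (E := Rd d) (μ := volume) hr).const_mul
      ((m.factorial : ℝ) * 2 ^ m)
  apply hint.mono'
  · exact (((continuous_const.add continuous_norm).pow k).mul
      (Real.continuous_exp.comp continuous_jbr.neg)).aestronglyMeasurable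
  · refine ae_of_all _ fun x => ?_
    set a : ℝ := 1 + ‖x‖ with ha
    have ha1 : 1 ≤ a := by simp [ha, norm_nonneg]
    have hapos : 0 < a := lt_of_lt_of_le one_pos ha1
    have habound : a / 2 ≤ jbr x := by
      have := one_le_jbr x; have := norm_le_jbr x
      simp only [ha]; linarith
    have hek : (a / 2) ^ m / (m.factorial : ℝ) ≤ Real.exp (a / 2) :=
      Real.pow_div_factorial_le_exp (a / 2) (by linarith) m
    have hfac : (0:ℝ) < (m.factorial : ℝ) := by positivity
    have h2m : (0:ℝ) < 2 ^ m := by positivity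
    have ham : a ^ m ≤ (m.factorial : ℝ) * 2 ^ m * Real.exp (a / 2) := by
      rw [div_pow, div_le_iff₀ hfac] at hek
      calc a ^ m = (a ^ m / 2 ^ m) * 2 ^ m := by field_simp
        _ ≤ (Real.exp (a / 2) * (m.factorial : ℝ)) * 2 ^ m := by
            apply mul_le_mul_of_nonneg_right hek h2m.le
        _ = (m.factorial : ℝ) * 2 ^ m * Real.exp (a / 2) := by ring
    have hexp : Real.exp (-jbr x) ≤ Real.exp (-(a / 2)) := by
      apply Real.exp_le_exp.2; linarith
    have key : a ^ m * Real.exp (-jbr x) ≤ (m.factorial : ℝ) * 2 ^ m := by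
      calc a ^ m * Real.exp (-jbr x) ≤ ((m.factorial : ℝ) * 2 ^ m * Real.exp (a / 2)) *
            Real.exp (-(a / 2)) := by
            apply mul_le_mul ham hexp (Real.exp_pos _).le (by positivity)
        _ = (m.factorial : ℝ) * 2 ^ m := by
            rw [mul_assoc, ← Real.exp_add]; simp
    have hnorm : ‖(1 + ‖x‖) ^ k * Real.exp (-jbr x)‖ = a ^ k * Real.exp (-jbr x) := by
      rw [Real.norm_eq_abs, abs_of_nonneg (by positivity)]
    rw [hnorm]
    have hrpow : a ^ (-((d : ℝ) + 1)) = (a ^ (d + 1 : ℕ))⁻¹ := by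
      rw [← Real.rpow_natCast a (d + 1), ← Real.rpow_neg hapos.le]
      norm_num
    rw [hrpow]
    have hpow : a ^ k * Real.exp (-jbr x) * a ^ (d + 1 : ℕ) = a ^ m * Real.exp (-jbr x) := by
      rw [hm]; ring
    have hdpos : (0:ℝ) < a ^ (d + 1 : ℕ) := by positivity
    rw [show ((m.factorial : ℝ) * 2 ^ m) * (a ^ (d + 1 : ℕ))⁻¹
        = ((m.factorial : ℝ) * 2 ^ m) / a ^ (d + 1 : ℕ) from (div_eq_mul_inv _ _).symm,
      le_div_iff₀ hdpos, hpow]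
    exact key





/-- The normalising constant. -/
def Z (d : ℕ) : ℝ := ∫ y : Rd d, Real.exp (-jbr y)

lemma integrable_exp_neg_jbr : Integrable (fun x : Rd d => Real.exp (-jbr x)) := by
  have := integrable_pow_mul_exp_neg_jbr (d := d) 0
  simpa using this

lemma Z_pos : 0 < Z d := by
  rw [Z, integral_pos_iff_support_of_nonneg (fun y => (Real.exp_pos _).le)
    integrable_exp_neg_jbr]
  have hs : (Function.support fun y : Rd d => Real.exp (-jbr y)) = Set.univ := by
    ext y; simp [Function.support, (Real.exp_pos (-jbr y)).ne']
  rw [hs]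
  exact isOpen_univ.measure_pos volume Set.univ_nonempty

lemma Nker_one_eq : Nker d 1 = fun x => (Z d)⁻¹ * Real.exp (-jbr x) := by
  funext x; simp [Nker, Z]

lemma Nker_pos (x : Rd d) : 0 < Nker d 1 x := by
  rw [Nker_one_eq]
  exact mul_pos (inv_pos.2 Z_pos) (Real.exp_pos _)

lemma Nker_le (x : Rd d) : Nker d 1 x ≤ (Z d)⁻¹ := by
  rw [Nker_one_eq]
  have h1 : Real.exp (-jbr x) ≤ 1 := by
    rw [Real.exp_le_one_iff]; have := one_le_jbr x; linarith
  have := inv_pos.2 (Z_pos (d := d))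
  nlinarith

lemma Nker_even (x : Rd d) : Nker d 1 (-x) = Nker d 1 x := by
  rw [Nker_one_eq]; simp [jbr_neg]

lemma integrable_Nker : Integrable (Nker d 1) := by
  rw [Nker_one_eq]; exact integrable_exp_neg_jbr.const_mul _

lemma integral_Nker : (∫ x : Rd d, Nker d 1 x) = 1 := by
  rw [Nker_one_eq]
  rw [integral_const_mul]
  exact inv_mul_cancel₀ Z_pos.ne'

lemma integrable_norm_mul_Nker : Integrable (fun x : Rd d => ‖x‖ * Nker d 1 x) := by
  rw [Nker_one_eq]
  have h := (integrable_pow_mul_exp_neg_jbr (d := d) 1).const_mul (Z d)⁻¹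
  apply h.mono'
  · apply AEStronglyMeasurable.mul continuous_norm.aestronglyMeasurable
    exact (continuous_const.mul
      (Real.continuous_exp.comp continuous_jbr.neg)).aestronglyMeasurable
  · refine ae_of_all _ fun x => ?_
    have h1 : (0:ℝ) < (Z d)⁻¹ := inv_pos.2 Z_pos
    have h2 : (0:ℝ) ≤ Real.exp (-jbr x) := (Real.exp_pos _).le
    have h3 : ‖x‖ ≤ (1 + ‖x‖) ^ 1 := by rw [pow_one]; linarith [norm_nonneg x]
    rw [Real.norm_eq_abs, abs_of_nonneg (by positivity)]
    calc ‖x‖ * ((Z d)⁻¹ * Real.exp (-jbr x)) = (Z d)⁻¹ * (‖x‖ * Real.exp (-jbr x)) := by ring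
      _ ≤ (Z d)⁻¹ * ((1 + ‖x‖) ^ 1 * Real.exp (-jbr x)) := by
          apply mul_le_mul_of_nonneg_left _ h1.le
          exact mul_le_mul_of_nonneg_right h3 h2

lemma differentiable_Nker : Differentiable ℝ (Nker d 1) := by
  rw [Nker_one_eq]
  exact (((differentiable_jbr).neg.exp)).const_mul _

lemma hasFDerivAt_Nker (x : Rd d) :
    HasFDerivAt (Nker d 1) (((Z d)⁻¹ * Real.exp (-jbr x)) • (-(fderiv ℝ jbr x))) x := by
  rw [Nker_one_eq]
  have h1 : HasFDerivAt jbr (fderiv ℝ jbr x) x := (differentiable_jbr x).hasFDerivAt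
  have h2 := (Real.hasDerivAt_exp (-jbr x)).comp_hasFDerivAt x h1.neg
  have h3 := h2.const_mul (Z d)⁻¹
  rw [smul_smul] at h3
  exact h3

lemma norm_fderiv_Nker_le (x : Rd d) : ‖fderiv ℝ (Nker d 1) x‖ ≤ Nker d 1 x := by
  have hnn : (0:ℝ) ≤ (Z d)⁻¹ * Real.exp (-jbr x) :=
    mul_nonneg (inv_pos.2 Z_pos).le (Real.exp_pos _).le
  rw [(hasFDerivAt_Nker x).fderiv, norm_smul, norm_neg, Real.norm_eq_abs,
    abs_of_nonneg hnn]
  have h2 : Nker d 1 x = (Z d)⁻¹ * Real.exp (-jbr x) := by rw [Nker_one_eq]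
  rw [h2]
  calc ((Z d)⁻¹ * Real.exp (-jbr x)) * ‖fderiv ℝ jbr x‖
      ≤ ((Z d)⁻¹ * Real.exp (-jbr x)) * 1 :=
        mul_le_mul_of_nonneg_left (norm_fderiv_jbr_le x) hnn
    _ = (Z d)⁻¹ * Real.exp (-jbr x) := mul_one _



variable {V : Rd d → ℝ} {B : ℝ} {ε : ℝ}

section mollsec

variable (hVd : Differentiable ℝ V) (hVpos : ∀ x, 0 < V x) (hVle : ∀ x, V x ≤ B)
  (hDV : ∀ x, ‖fderiv ℝ V x‖ ≤ V x) (hVeven : ∀ x, V (-x) = V x)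
  (hVint : Integrable V) (hVint1 : (∫ x, V x) = 1)
  (hVnormint : Integrable (fun x : Rd d => ‖x‖ * V x))
  (hε : 0 < ε)

include hε

lemma eps_ne : ε ≠ 0 := hε.ne'
lemma epsd_pos : (0:ℝ) < (ε ^ d)⁻¹ := by positivity

include hVpos in
lemma moll_pos (x : Rd d) : 0 < moll ε V x := mul_pos (epsd_pos hε) (hVpos _)

include hVpos hVle in
lemma moll_le (x : Rd d) : moll ε V x ≤ (ε ^ d)⁻¹ * B :=
  mul_le_mul_of_nonneg_left (hVle _) (epsd_pos hε).le

include hVeven in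
lemma moll_even (x : Rd d) : moll ε V (-x) = moll ε V x := by
  rw [moll, moll, smul_neg, hVeven]

include hVd in
lemma hasFDerivAt_moll (x : Rd d) :
    HasFDerivAt (moll ε V)
      (((ε ^ d)⁻¹ : ℝ) • ((fderiv ℝ V (ε⁻¹ • x)).comp
        ((ε⁻¹ : ℝ) • ContinuousLinearMap.id ℝ (Rd d)))) x := by
  have h1 : HasFDerivAt (fun y : Rd d => ε⁻¹ • y)
      ((ε⁻¹ : ℝ) • ContinuousLinearMap.id ℝ (Rd d)) x := (hasFDerivAt_id x).const_smul ε⁻¹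
  have h2 := ((hVd (ε⁻¹ • x)).hasFDerivAt).comp x h1
  exact h2.const_mul _

include hVd in
lemma moll_diff : Differentiable ℝ (moll ε V) :=
  fun x => (hasFDerivAt_moll hVd hε x).differentiableAt

include hVd in
lemma moll_cont : Continuous (moll ε V) := (moll_diff hVd hε).continuous

include hVd hVpos hDV in
lemma norm_fderiv_moll_le (x : Rd d) : ‖fderiv ℝ (moll ε V) x‖ ≤ ε⁻¹ * moll ε V x := by
  rw [(hasFDerivAt_moll hVd hε x).fderiv]
  have h0 : (0:ℝ) < (ε ^ d)⁻¹ := epsd_pos hε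
  rw [norm_smul, Real.norm_eq_abs, abs_of_nonneg h0.le]
  have h1 : ‖(fderiv ℝ V (ε⁻¹ • x)).comp ((ε⁻¹ : ℝ) • ContinuousLinearMap.id ℝ (Rd d))‖
      ≤ V (ε⁻¹ • x) * ε⁻¹ := by
    apply ContinuousLinearMap.opNorm_le_bound _
      (mul_nonneg (hVpos _).le (inv_pos.2 hε).le)
    intro v
    have hev : ((fderiv ℝ V (ε⁻¹ • x)).comp
        ((ε⁻¹ : ℝ) • ContinuousLinearMap.id ℝ (Rd d))) v
        = fderiv ℝ V (ε⁻¹ • x) (ε⁻¹ • v) := by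
      simp [ContinuousLinearMap.comp_apply]
    rw [hev]
    calc ‖fderiv ℝ V (ε⁻¹ • x) (ε⁻¹ • v)‖
        ≤ ‖fderiv ℝ V (ε⁻¹ • x)‖ * ‖(ε⁻¹ : ℝ) • v‖ :=
          ContinuousLinearMap.le_opNorm _ _
      _ ≤ V (ε⁻¹ • x) * (ε⁻¹ * ‖v‖) := by
          rw [norm_smul, Real.norm_eq_abs, abs_of_nonneg (inv_pos.2 hε).le]
          apply mul_le_mul (hDV _) le_rfl (by positivity) (hVpos _).le
      _ = V (ε⁻¹ • x) * ε⁻¹ * ‖v‖ := by ring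
  calc (ε ^ d)⁻¹ * ‖(fderiv ℝ V (ε⁻¹ • x)).comp ((ε⁻¹:ℝ) • ContinuousLinearMap.id ℝ (Rd d))‖
      ≤ (ε ^ d)⁻¹ * (V (ε⁻¹ • x) * ε⁻¹) := mul_le_mul_of_nonneg_left h1 h0.le
    _ = ε⁻¹ * moll ε V x := by rw [moll]; ring

include hVd hVpos hDV in
lemma norm_gradient_moll_le (x : Rd d) :
    ‖gradient (moll ε V) x‖ ≤ ε⁻¹ * moll ε V x := by
  rw [gradient, LinearIsometryEquiv.norm_map]
  exact norm_fderiv_moll_le hVd hVpos hDV hε x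

include hVd hVeven in
lemma gradient_moll_neg (x : Rd d) :
    gradient (moll ε V) (-x) = -gradient (moll ε V) x := by
  have h1 : HasFDerivAt (moll ε V) (fderiv ℝ (moll ε V) (-x)) (-x) :=
    (moll_diff hVd hε (-x)).hasFDerivAt
  have h2 : HasFDerivAt (fun y : Rd d => -y) (-(ContinuousLinearMap.id ℝ (Rd d))) x :=
    (hasFDerivAt_id x).neg
  have h3 := h1.comp x h2
  have heq : (moll ε V) ∘ (fun y : Rd d => -y) = moll ε V := by
    funext y
    show moll ε V (-y) = moll ε V y
    exact moll_even hVeven hε y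
  rw [heq] at h3
  have h4 := h3.unique (moll_diff hVd hε x).hasFDerivAt
  have h5 : fderiv ℝ (moll ε V) (-x) = -(fderiv ℝ (moll ε V) x) := by
    ext v
    have := congrArg (fun (A : Rd d →L[ℝ] ℝ) => A (-v)) h4
    simpa using this
  rw [gradient, gradient, h5, map_neg]

include hVd hVpos hDV hVint in
lemma integrable_gradient_moll : Integrable (fun z : Rd d => gradient (moll ε V) z) := by
  have hmeas : AEStronglyMeasurable (fun z : Rd d => gradient (moll ε V) z) volume := by
    have h1 : Measurable (fun z : Rd d => fderiv ℝ (moll ε V) z) := measurable_fderiv ℝ _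
    exact (((InnerProductSpace.toDual ℝ (Rd d)).symm.continuous.measurable).comp
      h1).aestronglyMeasurable
  have hint : Integrable (fun z : Rd d => ε⁻¹ * moll ε V z) := by
    apply Integrable.const_mul
    exact (hVint.comp_smul (inv_ne_zero (eps_ne hε))).const_mul _
  apply hint.mono' hmeas
  exact ae_of_all _ fun z => norm_gradient_moll_le hVd hVpos hDV hε z


include hVint in
lemma integrable_moll : Integrable (moll ε V) :=
  (hVint.comp_smul (inv_ne_zero (eps_ne hε))).const_mul _

include hVint1 in
lemma integral_moll : (∫ z, moll ε V z) = 1 := by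
  simp only [moll]
  rw [integral_const_mul,
    MeasureTheory.Measure.integral_comp_inv_smul_of_nonneg volume V hε.le,
    finrank_euclideanSpace_fin, hVint1, smul_eq_mul, mul_one]
  exact inv_mul_cancel₀ (pow_ne_zero _ (eps_ne hε))

lemma norm_moll_eq : (fun z : Rd d => ‖z‖ * moll ε V z)
    = fun z => ((ε ^ d)⁻¹ * ε) * ((fun u : Rd d => ‖u‖ * V u) (ε⁻¹ • z)) := by
  funext z
  simp only [moll]
  rw [norm_smul, Real.norm_eq_abs, abs_of_nonneg (inv_pos.2 hε).le]
  have h1 : ε * (ε⁻¹ * ‖z‖) = ‖z‖ := by field_simp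
  calc ‖z‖ * ((ε ^ d)⁻¹ * V (ε⁻¹ • z)) = (ε * (ε⁻¹ * ‖z‖)) * ((ε ^ d)⁻¹ * V (ε⁻¹ • z)) := by
        rw [h1]
    _ = (ε ^ d)⁻¹ * ε * (ε⁻¹ * ‖z‖ * V (ε⁻¹ • z)) := by ring

include hVnormint in
lemma integrable_norm_moll : Integrable (fun z : Rd d => ‖z‖ * moll ε V z) := by
  rw [norm_moll_eq hε]
  exact (hVnormint.comp_smul (inv_ne_zero (eps_ne hε))).const_mul _

include hVnormint in
lemma integral_norm_moll :
    (∫ z : Rd d, ‖z‖ * moll ε V z) = ε * ∫ u : Rd d, ‖u‖ * V u := by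
  rw [norm_moll_eq hε, integral_const_mul,
    MeasureTheory.Measure.integral_comp_inv_smul_of_nonneg volume (fun u : Rd d => ‖u‖ * V u) hε.le,
    finrank_euclideanSpace_fin, smul_eq_mul]
  have h2 : (ε:ℝ) ^ d ≠ 0 := pow_ne_zero _ (eps_ne hε)
  field_simp

include hVd hVpos hDV hVeven hVint in
lemma integral_gradient_moll_zero : (∫ z : Rd d, gradient (moll ε V) z) = 0 := by
  have h := MeasureTheory.integral_neg_eq_self (fun z : Rd d => gradient (moll ε V) z) volume
  simp only [gradient_moll_neg hVd hVeven hε, integral_neg] at h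
  have h2 : (2:ℝ) • (∫ z : Rd d, gradient (moll ε V) z) = 0 := by
    rw [two_smul]
    nth_rewrite 1 [← h]
    simp
  have := smul_eq_zero.1 h2
  simpa using this

end mollsec

section convsec

variable (hVd : Differentiable ℝ V) (hVpos : ∀ x, 0 < V x) (hVle : ∀ x, V x ≤ B)
  (hDV : ∀ x, ‖fderiv ℝ V x‖ ≤ V x) (hVeven : ∀ x, V (-x) = V x)
  (hVint : Integrable V) (hVint1 : (∫ x, V x) = 1)
  (hVnormint : Integrable (fun x : Rd d => ‖x‖ * V x))
  (hε : 0 < ε)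
  (ρ : Measure (Rd d)) [IsProbabilityMeasure ρ]

include hε hVd hVpos hVle

lemma B_pos : 0 < B := lt_of_lt_of_le (hVpos 0) (hVle 0)

lemma integrable_moll_shift (x : Rd d) : Integrable (fun y => moll ε V (x - y)) ρ := by
  apply Integrable.mono' (integrable_const ((ε ^ d)⁻¹ * B))
  · exact ((moll_cont hVd hε).comp (continuous_const.sub continuous_id)).aestronglyMeasurable
  · refine ae_of_all _ fun y => ?_
    rw [Real.norm_eq_abs, abs_of_nonneg (moll_pos hVpos hε _).le]
    exact moll_le hVpos hVle hε _

lemma convM_pos (x : Rd d) : 0 < convM ε V ρ x := by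
  rw [convM, integral_pos_iff_support_of_nonneg (fun y => (moll_pos hVpos hε _).le)
    (integrable_moll_shift hVd hVpos hVle hε ρ x)]
  have hs : (Function.support fun y => moll ε V (x - y)) = Set.univ := by
    ext y; simp [Function.support, (moll_pos hVpos hε (x - y)).ne']
  rw [hs, measure_univ]
  exact zero_lt_one

include hDV

lemma moll_lipschitz : LipschitzWith (Real.nnabs (ε⁻¹ * ((ε ^ d)⁻¹ * B))) (moll ε V) := by
  have hK0 : (0:ℝ) ≤ ε⁻¹ * ((ε ^ d)⁻¹ * B) := by
    have := B_pos hVd hVpos hVle hε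
    positivity
  apply lipschitzWith_of_nnnorm_fderiv_le (moll_diff hVd hε)
  intro x
  rw [← NNReal.coe_le_coe, coe_nnnorm, Real.coe_nnabs, abs_of_nonneg hK0]
  calc ‖fderiv ℝ (moll ε V) x‖ ≤ ε⁻¹ * moll ε V x := norm_fderiv_moll_le hVd hVpos hDV hε x
    _ ≤ ε⁻¹ * ((ε ^ d)⁻¹ * B) :=
      mul_le_mul_of_nonneg_left (moll_le hVpos hVle hε x) (inv_pos.2 hε).le

lemma hasFDerivAt_convM_aux (x₀ : Rd d) :
    Integrable (fun y => fderiv ℝ (moll ε V) (x₀ - y)) ρ ∧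
    HasFDerivAt (convM ε V ρ) (∫ y, fderiv ℝ (moll ε V) (x₀ - y) ∂ρ) x₀ := by
  have h := hasFDerivAt_integral_of_dominated_loc_of_lip
    (F := fun (x : Rd d) (y : Rd d) => moll ε V (x - y))
    (F' := fun y => fderiv ℝ (moll ε V) (x₀ - y))
    (bound := fun _ => ε⁻¹ * ((ε ^ d)⁻¹ * B)) (μ := ρ) (x₀ := x₀) Filter.univ_mem
    ?_ ?_ ?_ ?_ ?_ ?_
  · exact ⟨h.1, h.2⟩
  · exact Eventually.of_forall fun x =>
      ((moll_cont hVd hε).comp (continuous_const.sub continuous_id)).aestronglyMeasurable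
  · exact integrable_moll_shift hVd hVpos hVle hε ρ x₀
  · exact ((measurable_fderiv ℝ (moll ε V)).comp
      (measurable_const.sub measurable_id)).aestronglyMeasurable
  · refine ae_of_all _ fun y => ?_
    have h1 : LipschitzWith 1 (fun x : Rd d => x - y) := by
      apply LipschitzWith.of_dist_le_mul
      intro a b
      rw [NNReal.coe_one, one_mul, dist_eq_norm, dist_eq_norm]
      simp [sub_sub_sub_cancel_right]
    have h2 := (moll_lipschitz hVd hVpos hVle hDV hε).comp h1
    rw [mul_one] at h2
    exact h2.lipschitzOnWith
  · exact integrable_const _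
  · refine ae_of_all _ fun y => ?_
    have := ((moll_diff hVd hε (x₀ - y)).hasFDerivAt).comp x₀ ((hasFDerivAt_id x₀).sub_const y)
    simp only [ContinuousLinearMap.comp_id] at this
    exact this

lemma differentiable_convM : Differentiable ℝ (convM ε V ρ) :=
  fun x => ((hasFDerivAt_convM_aux hVd hVpos hVle hDV hε ρ x).2).differentiableAt

lemma norm_fderiv_convM_le (x : Rd d) :
    ‖fderiv ℝ (convM ε V ρ) x‖ ≤ ε⁻¹ * convM ε V ρ x := by
  rw [((hasFDerivAt_convM_aux hVd hVpos hVle hDV hε ρ x).2).fderiv]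
  have hb : ∀ᵐ y ∂ρ, ‖fderiv ℝ (moll ε V) (x - y)‖ ≤ ε⁻¹ * moll ε V (x - y) :=
    ae_of_all _ fun y => norm_fderiv_moll_le hVd hVpos hDV hε (x - y)
  calc ‖∫ y, fderiv ℝ (moll ε V) (x - y) ∂ρ‖
      ≤ ∫ y, ε⁻¹ * moll ε V (x - y) ∂ρ :=
        norm_integral_le_of_norm_le
          ((integrable_moll_shift hVd hVpos hVle hε ρ x).const_mul ε⁻¹) hb
    _ = ε⁻¹ * convM ε V ρ x := by rw [integral_const_mul, convM]

lemma hasFDerivAt_logconv (x : Rd d) :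
    HasFDerivAt (fun y => Real.log (convM ε V ρ y))
      ((convM ε V ρ x)⁻¹ • fderiv ℝ (convM ε V ρ) x) x :=
  (Real.hasDerivAt_log (convM_pos hVd hVpos hVle hε ρ x).ne').comp_hasFDerivAt x
    ((differentiable_convM hVd hVpos hVle hDV hε ρ x).hasFDerivAt)

lemma norm_fderiv_logconv_le (x : Rd d) :
    ‖fderiv ℝ (fun y => Real.log (convM ε V ρ y)) x‖ ≤ ε⁻¹ := by
  rw [(hasFDerivAt_logconv hVd hVpos hVle hDV hε ρ x).fderiv]
  have hu := convM_pos hVd hVpos hVle hε ρ x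
  rw [norm_smul, Real.norm_eq_abs, abs_of_nonneg (inv_pos.2 hu).le]
  calc (convM ε V ρ x)⁻¹ * ‖fderiv ℝ (convM ε V ρ) x‖
      ≤ (convM ε V ρ x)⁻¹ * (ε⁻¹ * convM ε V ρ x) :=
        mul_le_mul_of_nonneg_left (norm_fderiv_convM_le hVd hVpos hVle hDV hε ρ x)
          (inv_pos.2 hu).le
    _ = ε⁻¹ := by field_simp

lemma differentiable_logconv : Differentiable ℝ (fun y => Real.log (convM ε V ρ y)) :=
  fun x => (hasFDerivAt_logconv hVd hVpos hVle hDV hε ρ x).differentiableAt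

lemma lipschitz_logconv :
    LipschitzWith (Real.nnabs ε⁻¹) (fun y => Real.log (convM ε V ρ y)) := by
  apply lipschitzWith_of_nnnorm_fderiv_le (differentiable_logconv hVd hVpos hVle hDV hε ρ)
  intro x
  rw [← NNReal.coe_le_coe, coe_nnnorm, Real.coe_nnabs, abs_of_nonneg (inv_pos.2 hε).le]
  exact norm_fderiv_logconv_le hVd hVpos hVle hDV hε ρ x

lemma logconv_diff_le (x y : Rd d) :
    |Real.log (convM ε V ρ x) - Real.log (convM ε V ρ y)| ≤ ε⁻¹ * ‖x - y‖ := by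
  have h := (lipschitz_logconv hVd hVpos hVle hDV hε ρ).dist_le_mul x y
  rw [Real.dist_eq, dist_eq_norm] at h
  calc |Real.log (convM ε V ρ x) - Real.log (convM ε V ρ y)|
      ≤ (Real.nnabs ε⁻¹ : ℝ) * ‖x - y‖ := h
    _ = ε⁻¹ * ‖x - y‖ := by rw [Real.coe_nnabs, abs_of_nonneg (inv_pos.2 hε).le]

end convsec

section omegasec

variable (hVd : Differentiable ℝ V) (hVpos : ∀ x, 0 < V x) (hVle : ∀ x, V x ≤ B)
  (hDV : ∀ x, ‖fderiv ℝ V x‖ ≤ V x) (hVeven : ∀ x, V (-x) = V x)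
  (hVint : Integrable V) (hVint1 : (∫ x, V x) = 1)
  (hVnormint : Integrable (fun x : Rd d => ‖x‖ * V x))
  (hε : 0 < ε)
  (ρ : Measure (Rd d)) [IsProbabilityMeasure ρ]

include hVd hVpos hVle hDV hVeven hVint hVint1 hVnormint hε

lemma omega_eq (x : Rd d) :
    omegaGlob d ε V ρ x
      = ∫ z, Real.log (convM ε V ρ (x - z)) • gradient (moll ε V) z := by
  rw [omegaGlob,
    ← MeasureTheory.integral_sub_left_eq_self
      (fun z : Rd d => Real.log (convM ε V ρ (x - z)) • gradient (moll ε V) z) volume x]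
  congr 1
  funext y
  simp [sub_sub_cancel]

lemma aesm_gradient_moll :
    AEStronglyMeasurable (fun z : Rd d => gradient (moll ε V) z) volume :=
  (((InnerProductSpace.toDual ℝ (Rd d)).symm.continuous.measurable).comp
    (measurable_fderiv ℝ (moll ε V))).aestronglyMeasurable

lemma integrable_L_smul_gm (x : Rd d) :
    Integrable (fun z : Rd d =>
      Real.log (convM ε V ρ (x - z)) • gradient (moll ε V) z) := by
  have hg : Integrable (fun z : Rd d =>
      (|Real.log (convM ε V ρ x)| + ε⁻¹ * ‖z‖) * (ε⁻¹ * moll ε V z)) := by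
    have h1 : (fun z : Rd d =>
        (|Real.log (convM ε V ρ x)| + ε⁻¹ * ‖z‖) * (ε⁻¹ * moll ε V z))
        = fun z => (|Real.log (convM ε V ρ x)| * ε⁻¹) * moll ε V z
            + (ε⁻¹ * ε⁻¹) * (‖z‖ * moll ε V z) := by
      funext z; ring
    rw [h1]
    exact ((integrable_moll hVint hε).const_mul _).add
      ((integrable_norm_moll hVnormint hε).const_mul _)
  apply hg.mono'
  · refine AEStronglyMeasurable.smul (f := fun z => Real.log (convM ε V ρ (x - z)))
      (g := fun z => gradient (moll ε V) z) ?_ ?_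
    · exact ((lipschitz_logconv hVd hVpos hVle hDV hε ρ).continuous.comp
        (continuous_const.sub continuous_id)).aestronglyMeasurable
    · exact aesm_gradient_moll hVd hVpos hVle hDV hVeven hVint hVint1 hVnormint hε
  · refine ae_of_all _ fun z => ?_
    rw [norm_smul, Real.norm_eq_abs]
    have h2 : |Real.log (convM ε V ρ (x - z))|
        ≤ |Real.log (convM ε V ρ x)| + ε⁻¹ * ‖z‖ := by
      have h3 := logconv_diff_le hVd hVpos hVle hDV hε ρ (x - z) x
      rw [show x - z - x = -z by abel, norm_neg] at h3
      have h5 := abs_sub_abs_le_abs_sub (Real.log (convM ε V ρ (x - z)))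
        (Real.log (convM ε V ρ x))
      linarith
    exact mul_le_mul h2 (norm_gradient_moll_le hVd hVpos hDV hε z) (norm_nonneg _)
      (by positivity)

lemma norm_omega_le (x : Rd d) :
    ‖omegaGlob d ε V ρ x‖ ≤ ε⁻¹ * ∫ u : Rd d, ‖u‖ * V u := by
  have h1 : Integrable (fun z : Rd d =>
      Real.log (convM ε V ρ (x - z)) • gradient (moll ε V) z) :=
    integrable_L_smul_gm hVd hVpos hVle hDV hVeven hVint hVint1 hVnormint hε ρ x
  have h2 : Integrable (fun z : Rd d =>
      Real.log (convM ε V ρ x) • gradient (moll ε V) z) :=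
    (integrable_gradient_moll hVd hVpos hDV hVint hε).smul (Real.log (convM ε V ρ x))
  have hsplit : (∫ z, Real.log (convM ε V ρ (x - z)) • gradient (moll ε V) z)
      = ∫ z, (Real.log (convM ε V ρ (x - z)) - Real.log (convM ε V ρ x))
          • gradient (moll ε V) z := by
    have he : (fun z : Rd d =>
        (Real.log (convM ε V ρ (x - z)) - Real.log (convM ε V ρ x))
          • gradient (moll ε V) z)
        = fun z => Real.log (convM ε V ρ (x - z)) • gradient (moll ε V) z
            - Real.log (convM ε V ρ x) • gradient (moll ε V) z := by
      funext z; rw [sub_smul]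
    rw [he, integral_sub h1 h2, integral_smul,
      integral_gradient_moll_zero hVd hVpos hDV hVeven hVint hε, smul_zero, sub_zero]
  rw [omega_eq hVd hVpos hVle hDV hVeven hVint hVint1 hVnormint hε ρ x, hsplit]
  have hgint : Integrable (fun z : Rd d => (ε⁻¹ * ε⁻¹) * (‖z‖ * moll ε V z)) :=
    (integrable_norm_moll hVnormint hε).const_mul _
  have hb : ∀ᵐ z ∂(volume : Measure (Rd d)),
      ‖(Real.log (convM ε V ρ (x - z)) - Real.log (convM ε V ρ x))
        • gradient (moll ε V) z‖ ≤ (ε⁻¹ * ε⁻¹) * (‖z‖ * moll ε V z) := by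
    refine ae_of_all _ fun z => ?_
    rw [norm_smul, Real.norm_eq_abs]
    have h3 := logconv_diff_le hVd hVpos hVle hDV hε ρ (x - z) x
    rw [show x - z - x = -z by abel, norm_neg] at h3
    calc |Real.log (convM ε V ρ (x - z)) - Real.log (convM ε V ρ x)|
          * ‖gradient (moll ε V) z‖
        ≤ (ε⁻¹ * ‖z‖) * (ε⁻¹ * moll ε V z) :=
          mul_le_mul h3 (norm_gradient_moll_le hVd hVpos hDV hε z) (norm_nonneg _)
            (by positivity)
      _ = (ε⁻¹ * ε⁻¹) * (‖z‖ * moll ε V z) := by ring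
  calc ‖∫ z, (Real.log (convM ε V ρ (x - z)) - Real.log (convM ε V ρ x))
        • gradient (moll ε V) z‖
      ≤ ∫ z, (ε⁻¹ * ε⁻¹) * (‖z‖ * moll ε V z) := norm_integral_le_of_norm_le hgint hb
    _ = (ε⁻¹ * ε⁻¹) * ∫ z : Rd d, ‖z‖ * moll ε V z := integral_const_mul _ _
    _ = ε⁻¹ * ∫ u : Rd d, ‖u‖ * V u := by
        rw [integral_norm_moll hVnormint hε]
        field_simp

lemma hasFDerivAt_omega (x₀ : Rd d) :
    HasFDerivAt (omegaGlob d ε V ρ)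
      (∫ z, (fderiv ℝ (fun y => Real.log (convM ε V ρ y)) (x₀ - z)).smulRight
        (gradient (moll ε V) z)) x₀ := by
  have key := hasFDerivAt_integral_of_dominated_loc_of_lip
    (F := fun (x : Rd d) (z : Rd d) =>
      Real.log (convM ε V ρ (x - z)) • gradient (moll ε V) z)
    (F' := fun z => (fderiv ℝ (fun y => Real.log (convM ε V ρ y)) (x₀ - z)).smulRight
      (gradient (moll ε V) z))
    (bound := fun z => ε⁻¹ * ‖gradient (moll ε V) z‖) (μ := volume) (x₀ := x₀) Filter.univ_mem
    ?_ ?_ ?_ ?_ ?_ ?_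
  · have homega : omegaGlob d ε V ρ = fun x =>
        ∫ z, Real.log (convM ε V ρ (x - z)) • gradient (moll ε V) z :=
      funext fun x => omega_eq hVd hVpos hVle hDV hVeven hVint hVint1 hVnormint hε ρ x
    rw [homega]
    exact key.2
  · refine Eventually.of_forall fun x => ?_
    refine AEStronglyMeasurable.smul (f := fun z => Real.log (convM ε V ρ (x - z)))
      (g := fun z => gradient (moll ε V) z) ?_ ?_
    · exact ((lipschitz_logconv hVd hVpos hVle hDV hε ρ).continuous.comp
        (continuous_const.sub continuous_id)).aestronglyMeasurable
    · exact aesm_gradient_moll hVd hVpos hVle hDV hVeven hVint hVint1 hVnormint hε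
  · exact integrable_L_smul_gm hVd hVpos hVle hDV hVeven hVint hVint1 hVnormint hε ρ x₀
  · have m1 : Measurable (fun z : Rd d =>
        fderiv ℝ (fun y => Real.log (convM ε V ρ y)) (x₀ - z)) :=
      (measurable_fderiv ℝ _).comp (measurable_const.sub measurable_id)
    have m2 : Measurable (fun z : Rd d => gradient (moll ε V) z) :=
      ((InnerProductSpace.toDual ℝ (Rd d)).symm.continuous.measurable).comp
        (measurable_fderiv ℝ (moll ε V))
    have hc : Continuous (fun p : (Rd d →L[ℝ] ℝ) × Rd d => p.1.smulRight p.2) :=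
      (isBoundedBilinearMap_smulRight (𝕜 := ℝ)).continuous
    exact ((hc.measurable).comp (m1.prodMk m2)).aestronglyMeasurable
  · refine ae_of_all _ fun z => ?_
    have hlip : LipschitzWith (Real.nnabs (ε⁻¹ * ‖gradient (moll ε V) z‖))
        (fun x : Rd d =>
          Real.log (convM ε V ρ (x - z)) • gradient (moll ε V) z) := by
      apply LipschitzWith.of_dist_le_mul
      intro a b
      rw [dist_eq_norm, ← sub_smul, norm_smul, Real.norm_eq_abs, Real.coe_nnabs,
        abs_of_nonneg (mul_nonneg (inv_pos.2 hε).le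
          (norm_nonneg (gradient (moll ε V) z)))]
      have h3 := logconv_diff_le hVd hVpos hVle hDV hε ρ (a - z) (b - z)
      rw [show a - z - (b - z) = a - b by abel] at h3
      rw [dist_eq_norm]
      calc |Real.log (convM ε V ρ (a - z)) - Real.log (convM ε V ρ (b - z))|
            * ‖gradient (moll ε V) z‖
          ≤ (ε⁻¹ * ‖a - b‖) * ‖gradient (moll ε V) z‖ :=
            mul_le_mul_of_nonneg_right h3 (norm_nonneg _)
        _ = ε⁻¹ * ‖gradient (moll ε V) z‖ * ‖a - b‖ := by ring
    exact hlip.lipschitzOnWith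
  · exact ((integrable_gradient_moll hVd hVpos hDV hVint hε).norm).const_mul _
  · refine ae_of_all _ fun z => ?_
    have h1 : HasFDerivAt (fun x : Rd d => Real.log (convM ε V ρ (x - z)))
        (fderiv ℝ (fun y => Real.log (convM ε V ρ y)) (x₀ - z)) x₀ := by
      have := ((differentiable_logconv hVd hVpos hVle hDV hε ρ (x₀ - z)).hasFDerivAt).comp x₀
        ((hasFDerivAt_id x₀).sub_const z)
      simp only [ContinuousLinearMap.comp_id] at this
      exact this
    exact h1.smul_const (gradient (moll ε V) z)

lemma norm_fderiv_omega_le (x : Rd d) :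
    ‖fderiv ℝ (omegaGlob d ε V ρ) x‖ ≤ ε⁻¹ * ε⁻¹ := by
  rw [(hasFDerivAt_omega hVd hVpos hVle hDV hVeven hVint hVint1 hVnormint hε ρ x).fderiv]
  have hgint : Integrable (fun z : Rd d => ε⁻¹ * (ε⁻¹ * moll ε V z)) :=
    ((integrable_moll hVint hε).const_mul _).const_mul _
  have hb : ∀ᵐ z ∂(volume : Measure (Rd d)),
      ‖(fderiv ℝ (fun y => Real.log (convM ε V ρ y)) (x - z)).smulRight
        (gradient (moll ε V) z)‖ ≤ ε⁻¹ * (ε⁻¹ * moll ε V z) := by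
    refine ae_of_all _ fun z => ?_
    rw [ContinuousLinearMap.norm_smulRight_apply]
    exact mul_le_mul (norm_fderiv_logconv_le hVd hVpos hVle hDV hε ρ (x - z))
      (norm_gradient_moll_le hVd hVpos hDV hε z) (norm_nonneg _) (inv_pos.2 hε).le
  calc ‖∫ z, (fderiv ℝ (fun y => Real.log (convM ε V ρ y)) (x - z)).smulRight
        (gradient (moll ε V) z)‖
      ≤ ∫ z, ε⁻¹ * (ε⁻¹ * moll ε V z) := norm_integral_le_of_norm_le hgint hb
    _ = ε⁻¹ * (ε⁻¹ * ∫ z, moll ε V z) := by rw [integral_const_mul, integral_const_mul]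
    _ = ε⁻¹ * ε⁻¹ := by rw [integral_moll hVint1 hε, mul_one]

end omegasec


end VB

/-- for the globally supported kernel `V₁ = N₁`, the convolution
`V_ε*ρ` is everywhere positive and the velocity field `∇V_ε*log(V_ε*ρ)` is
bounded by `C/ε`, its Jacobian by `C/ε²`, with `C = C(V₁)`. -/
theorem velocity_bound_global_kernel (d : ℕ) :
    (∀ ε : ℝ, 0 < ε → ∀ ρ : Measure (Rd d), IsProbabilityMeasure ρ →
      ∀ x, 0 < convM ε (Nker d 1) ρ x)
    ∧ ∃ C > 0, ∀ ε : ℝ, 0 < ε →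
        ∀ ρ : Measure (Rd d), IsProbabilityMeasure ρ → FinSecondMoment ρ →
          (∀ x, ‖omegaGlob d ε (Nker d 1) ρ x‖ ≤ C / ε) ∧
          (∀ x, ‖fderiv ℝ (omegaGlob d ε (Nker d 1) ρ) x‖ ≤ C / ε ^ 2) := by
  classical
  have hVd := VB.differentiable_Nker (d := d)
  have hVpos := VB.Nker_pos (d := d)
  have hVle := VB.Nker_le (d := d)
  have hDV := VB.norm_fderiv_Nker_le (d := d)
  have hVeven := VB.Nker_even (d := d)
  have hVint := VB.integrable_Nker (d := d)
  have hVint1 := VB.integral_Nker (d := d)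
  have hVnormint := VB.integrable_norm_mul_Nker (d := d)
  have hM : (0:ℝ) ≤ ∫ u : Rd d, ‖u‖ * Nker d 1 u :=
    integral_nonneg fun u => mul_nonneg (norm_nonneg _) (hVpos u).le
  constructor
  · intro ε hε ρ hρ x
    haveI := hρ
    exact VB.convM_pos hVd hVpos hVle hε ρ x
  · refine ⟨(∫ u : Rd d, ‖u‖ * Nker d 1 u) + 1, by linarith, ?_⟩
    intro ε hε ρ hρ _hsec
    haveI := hρ
    constructor
    · intro x
      have h := VB.norm_omega_le hVd hVpos hVle hDV hVeven hVint hVint1 hVnormint hε ρ x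
      have h2 : ε⁻¹ * (∫ u : Rd d, ‖u‖ * Nker d 1 u)
          ≤ ε⁻¹ * ((∫ u : Rd d, ‖u‖ * Nker d 1 u) + 1) :=
        mul_le_mul_of_nonneg_left (by linarith) (inv_pos.2 hε).le
      have h3 : ((∫ u : Rd d, ‖u‖ * Nker d 1 u) + 1) / ε
          = ε⁻¹ * ((∫ u : Rd d, ‖u‖ * Nker d 1 u) + 1) := by
        rw [div_eq_mul_inv, mul_comm]
      rw [h3]
      exact le_trans h h2
    · intro x
      have h := VB.norm_fderiv_omega_le hVd hVpos hVle hDV hVeven hVint hVint1 hVnormint hε ρ x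
      have h2 : ε⁻¹ * ε⁻¹ ≤ ((∫ u : Rd d, ‖u‖ * Nker d 1 u) + 1) / ε ^ 2 := by
        rw [div_eq_mul_inv]
        have he2 : (ε ^ 2)⁻¹ = ε⁻¹ * ε⁻¹ := by
          rw [sq, mul_inv]
        rw [he2]
        nth_rewrite 1 [← one_mul (ε⁻¹ * ε⁻¹)]
        apply mul_le_mul_of_nonneg_right (by linarith)
        positivity
      exact le_trans h h2
end
end

section
/- Let p ∈ [1,∞), 0 < ε ≤ 1, N(x) = exp(−⟨x⟩^p), and N_ε(x) = ε^{−d}N(x/ε). Let ρ be a Borel probability measure on ℝ^d and R > 0 such that ρ(B_R) ≥ 1/2. Then there exists a constant C_{p,R} > 0 depending only on p, R (and d) such that |log((N_ε*ρ)(x))| ≤ C_{p,R} (⟨x⟩/ε)^p for all x ∈ ℝ^d; in particular N_ε*ρ(x) > 0 everywhere. -/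
open MeasureTheory Filter
open scoped ENNReal Topology RealInnerProductSpace

noncomputable section

set_option maxHeartbeats 1000000 in
/-- positivity and logarithmic bound for the mollification with
the globally supported kernel `N(x) = exp(-⟨x⟩^p)`:
`|log(N_ε*ρ(x))| ≤ C_{p,R} (⟨x⟩/ε)^p` whenever `ρ(B_R) ≥ 1/2`. -/
theorem log_conv_global_rescaling
    (d : ℕ) (p : ℝ) (hp : 1 ≤ p) (R : ℝ) (hR : 0 < R) :
    ∃ C > 0, ∀ ε : ℝ, 0 < ε → ε ≤ 1 →
      ∀ ρ : Measure (Rd d), IsProbabilityMeasure ρ →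
        (1 / 2 : ℝ≥0∞) ≤ ρ (Metric.closedBall 0 R) →
        ∀ x : Rd d,
          0 < convM ε (fun z => Real.exp (-(jbr z ^ p))) ρ x ∧
          |Real.log (convM ε (fun z => Real.exp (-(jbr z ^ p))) ρ x)|
            ≤ C * (jbr x / ε) ^ p := by
  have hp0 : (0:ℝ) ≤ p := by linarith
  set K : ℝ := (2 * (1 + R ^ 2)) ^ (p / 2) with hK
  have hKpos : 0 < K := Real.rpow_pos_of_pos (by positivity) _
  refine ⟨(d : ℝ) + 1 + K, by nlinarith [hKpos, (Nat.cast_nonneg d : (0:ℝ) ≤ d)], ?_⟩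
  intro ε hε hε1 ρ hρ hρR x
  have hjbr1 : ∀ z : Rd d, 1 ≤ jbr z := fun z =>
    Real.one_le_sqrt.mpr (le_add_of_nonneg_right (sq_nonneg _))
  have hjbr0 : ∀ z : Rd d, 0 < jbr z := fun z => lt_of_lt_of_le one_pos (hjbr1 z)
  have hεinv1 : 1 ≤ ε⁻¹ := by
    nlinarith [inv_pos.mpr hε, mul_inv_cancel₀ (ne_of_gt hε)]
  set A : ℝ := (jbr x / ε) ^ p with hA
  have hdiv1 : 1 ≤ jbr x / ε := by
    rw [le_div_iff₀ hε, one_mul]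
    calc ε ≤ 1 := hε1
    _ ≤ jbr x := hjbr1 x
  have hA1 : 1 ≤ A := by rw [hA]; exact Real.one_le_rpow hdiv1 hp0
  have hA0 : 0 < A := lt_of_lt_of_le one_pos hA1
  clear_value K A
  -- the integrand
  set f : Rd d → ℝ := fun y => moll ε (fun z => Real.exp (-(jbr z ^ p))) (x - y) with hf
  have hfpos : ∀ y, 0 < f y := by
    intro y
    simp only [hf, moll]
    positivity
  have hfle : ∀ y, f y ≤ (ε ^ d)⁻¹ := by
    intro y
    simp only [hf, moll]
    have h1 : Real.exp (-(jbr (ε⁻¹ • (x - y)) ^ p)) ≤ 1 := by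
      rw [Real.exp_le_one_iff, neg_nonpos]
      exact Real.rpow_nonneg (le_of_lt (hjbr0 _)) p
    calc (ε ^ d)⁻¹ * Real.exp (-(jbr (ε⁻¹ • (x - y)) ^ p))
        ≤ (ε ^ d)⁻¹ * 1 := by
          apply mul_le_mul_of_nonneg_left h1 (by positivity)
      _ = (ε ^ d)⁻¹ := mul_one _
  have hεd1 : (1:ℝ) ≤ (ε ^ d)⁻¹ := by
    have h1 : ε ^ d ≤ 1 := pow_le_one₀ (le_of_lt hε) hε1
    have h2 : (0:ℝ) < ε ^ d := pow_pos hε d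
    nlinarith [inv_pos.mpr h2, mul_inv_cancel₀ (ne_of_gt h2)]
  -- lower bound on the ball
  have hflow : ∀ y ∈ Metric.closedBall (0 : Rd d) R, Real.exp (-(K * A)) ≤ f y := by
    intro y hy
    have hyR : ‖y‖ ≤ R := by simpa [Metric.mem_closedBall, dist_eq_norm] using hy
    have hxy : ‖x - y‖ ≤ ‖x‖ + R := (norm_sub_le x y).trans (by linarith)
    have hnorm : ‖ε⁻¹ • (x - y)‖ = ε⁻¹ * ‖x - y‖ := by
      rw [norm_smul, Real.norm_eq_abs, abs_of_pos (by positivity)]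
    have hsq : 1 + ‖ε⁻¹ • (x - y)‖ ^ 2 ≤ 2 * (1 + R ^ 2) * ((1 + ‖x‖ ^ 2) * (ε⁻¹) ^ 2) := by
      rw [hnorm, mul_pow]
      have h2 : ‖x - y‖ ^ 2 ≤ 2 * ‖x‖ ^ 2 + 2 * R ^ 2 := by
        nlinarith [norm_nonneg (x - y), norm_nonneg x, sq_nonneg (‖x‖ - R)]
      have h3 : (1:ℝ) ≤ (ε⁻¹) ^ 2 := one_le_pow₀ hεinv1
      have h4 : (ε⁻¹) ^ 2 * ‖x - y‖ ^ 2 ≤ (ε⁻¹) ^ 2 * (2 * ‖x‖ ^ 2 + 2 * R ^ 2) :=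
        mul_le_mul_of_nonneg_left h2 (sq_nonneg _)
      nlinarith [h3, h4, mul_nonneg (mul_nonneg (sq_nonneg (ε⁻¹)) (sq_nonneg R)) (sq_nonneg ‖x‖),
        sq_nonneg ‖x‖, sq_nonneg R]
    have hbr : jbr (ε⁻¹ • (x - y)) ≤ Real.sqrt (2 * (1 + R ^ 2)) * (jbr x / ε) := by
      have := Real.sqrt_le_sqrt hsq
      rw [jbr]
      refine this.trans (le_of_eq ?_)
      rw [Real.sqrt_mul (by positivity), Real.sqrt_mul (by positivity),
        Real.sqrt_mul (by positivity), Real.sqrt_sq (by positivity), jbr, div_eq_mul_inv]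
    have hpow : jbr (ε⁻¹ • (x - y)) ^ p ≤ K * A := by
      have h1 : jbr (ε⁻¹ • (x - y)) ^ p ≤ (Real.sqrt (2 * (1 + R ^ 2)) * (jbr x / ε)) ^ p :=
        Real.rpow_le_rpow (le_of_lt (hjbr0 _)) hbr hp0
      refine h1.trans (le_of_eq ?_)
      rw [hA, hK, Real.mul_rpow (Real.sqrt_nonneg _) (by positivity),
        Real.sqrt_eq_rpow, ← Real.rpow_mul (by positivity)]
      ring_nf
    simp only [hf, moll]
    calc Real.exp (-(K * A)) = 1 * Real.exp (-(K * A)) := (one_mul _).symm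
      _ ≤ (ε ^ d)⁻¹ * Real.exp (-(jbr (ε⁻¹ • (x - y)) ^ p)) := by
          apply mul_le_mul hεd1 (Real.exp_le_exp.mpr (by linarith)) (Real.exp_pos _).le
            (by positivity)
  -- integrability
  have hfcont : Continuous f := by
    have hjc : Continuous fun z : Rd d => jbr z := by
      simp only [jbr]
      exact (continuous_const.add (continuous_norm.pow 2)).sqrt
    have : Continuous fun z : Rd d => Real.exp (-(jbr z ^ p)) := by
      apply Real.continuous_exp.comp
      apply Continuous.neg
      exact hjc.rpow_const fun z => Or.inl (ne_of_gt (hjbr0 z))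
    simp only [hf, moll]
    exact continuous_const.mul (this.comp (by fun_prop : Continuous fun y : Rd d => ε⁻¹ • (x - y)))
  have hint : Integrable f ρ := by
    refine (integrable_const ((ε ^ d)⁻¹ : ℝ)).mono' hfcont.aestronglyMeasurable ?_
    filter_upwards with y
    rw [Real.norm_eq_abs, abs_of_pos (hfpos y)]
    exact hfle y
  -- the convolution value
  set v : ℝ := convM ε (fun z => Real.exp (-(jbr z ^ p))) ρ x with hv
  have hvint : v = ∫ y, f y ∂ρ := rfl
  have hmeasR : (ρ (Metric.closedBall (0 : Rd d) R)).toReal ≥ 1 / 2 := by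
    have := ENNReal.toReal_mono (measure_ne_top ρ _) hρR
    simpa using this
  have hlow : Real.exp (-(K * A)) * (1 / 2) ≤ v := by
    rw [hvint]
    calc Real.exp (-(K * A)) * (1 / 2)
        ≤ Real.exp (-(K * A)) * (ρ (Metric.closedBall (0 : Rd d) R)).toReal := by
          apply mul_le_mul_of_nonneg_left hmeasR (Real.exp_pos _).le
      _ ≤ ∫ y in Metric.closedBall (0 : Rd d) R, f y ∂ρ := by
          have h := setIntegral_ge_of_const_le_real measurableSet_closedBall (measure_ne_top ρ _)
            hflow hint.integrableOn
          simp only [smul_eq_mul, Measure.real] at h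
          linarith [h]
      _ ≤ ∫ y, f y ∂ρ := setIntegral_le_integral hint
          (Filter.Eventually.of_forall fun y => (hfpos y).le)
  have hvpos : 0 < v := lt_of_lt_of_le (by positivity) hlow
  refine ⟨hvpos, ?_⟩
  have hup : v ≤ (ε ^ d)⁻¹ := by
    rw [hvint]
    calc ∫ y, f y ∂ρ ≤ ∫ _y : Rd d, (ε ^ d)⁻¹ ∂ρ :=
        integral_mono hint (integrable_const _) hfle
      _ = (ε ^ d)⁻¹ := by simp
  have hεinvA : ε⁻¹ ≤ A := by
    rw [hA]
    calc ε⁻¹ = ε⁻¹ ^ (1:ℝ) := (Real.rpow_one _).symm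
      _ ≤ ε⁻¹ ^ p := Real.rpow_le_rpow_of_exponent_le hεinv1 hp
      _ ≤ (jbr x / ε) ^ p := by
          apply Real.rpow_le_rpow (by positivity) ?_ hp0
          rw [div_eq_mul_inv]
          nlinarith [hjbr1 x, hεinv1]
  have hlogup : Real.log v ≤ ((d : ℝ) + 1 + K) * A := by
    have h1 : Real.log v ≤ Real.log ((ε ^ d)⁻¹) := Real.log_le_log hvpos hup
    have h2 : Real.log ((ε ^ d)⁻¹) = (d : ℝ) * Real.log ε⁻¹ := by
      rw [← inv_pow, Real.log_pow]
    have h3 : Real.log ε⁻¹ ≤ ε⁻¹ := by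
      have := Real.log_le_sub_one_of_pos (show (0:ℝ) < ε⁻¹ by positivity)
      linarith
    have h4 : (d:ℝ) * Real.log ε⁻¹ ≤ (d:ℝ) * A := by
      apply mul_le_mul_of_nonneg_left (h3.trans hεinvA) (Nat.cast_nonneg d)
    nlinarith [hA1, hKpos, (Nat.cast_nonneg d : (0:ℝ) ≤ d)]
  have hloglow : -(((d : ℝ) + 1 + K) * A) ≤ Real.log v := by
    have h1 : Real.log (Real.exp (-(K * A)) * (1 / 2)) ≤ Real.log v :=
      Real.log_le_log (by positivity) hlow
    have h2 : Real.log (Real.exp (-(K * A)) * (1 / 2)) = -(K * A) - Real.log 2 := by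
      rw [Real.log_mul (Real.exp_ne_zero _) (by norm_num), Real.log_exp]
      rw [show (1/2 : ℝ) = 2⁻¹ by norm_num, Real.log_inv]
      ring
    have h3 : Real.log 2 < 1 := by
      have := Real.log_two_lt_d9
      linarith
    nlinarith [hA1, hKpos, (Nat.cast_nonneg d : (0:ℝ) ≤ d), Real.log_pos (by norm_num : (1:ℝ) < 2)]
  rw [abs_le]
  exact ⟨hloglow, hlogup⟩
end
end
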